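/- For u ∈ H and v ∈ D(A), ‖B(u,v)‖_V ≤ C₃ |u| |Av| with C₃ = |a|(λ³+λ^{-3}) + |b|(λ+λ^{-2}). -/

import Mathlib

open scoped BigOperators

/-- Wave numbers `kₙ = k₀ λⁿ`. -/
noncomputable def kk (k0 lam : ℝ) (n : ℤ) : ℝ := k0 * lam ^ n

/-- The sabra shell model bilinear operator `B(u,v)ₙ`. -/
noncomputable def sabraB (a b k0 lam : ℝ) (u v : ℤ → ℂ) (n : ℤ) : ℂ :=
  if 1 ≤ n then
    -Complex.I *
      ((a : ℂ) * (kk k0 lam (n + 1) : ℂ) * v (n + 2) * (starRingEnd ℂ) (u (n + 1))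
        + (b : ℂ) * (kk k0 lam n : ℂ) * v (n + 1) * (starRingEnd ℂ) (u (n - 1))
        + (a : ℂ) * (kk k0 lam (n - 1) : ℂ) * u (n - 1) * v (n - 2)
        + (b : ℂ) * (kk k0 lam (n - 1) : ℂ) * v (n - 1) * u (n - 2))
  else 0

section Aux

open scoped ENNReal NNReal

set_option maxHeartbeats 1000000

lemma memℓp_two_of_sq' (f : ℤ → ℂ) (h : Summable fun n => ‖f n‖ ^ 2) : Memℓp f 2 := by
  apply memℓp_gen
  have h2 : (2 : ℝ≥0∞).toReal = 2 := by norm_num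
  rw [h2]
  convert h using 2 with n
  rw [← Real.rpow_natCast]; norm_num

lemma summable_sq_of_memℓp' (f : ℤ → ℂ) (h : Memℓp f 2) : Summable fun n => ‖f n‖ ^ 2 := by
  have h' := (memℓp_gen_iff (p := 2) (by norm_num)).1 h
  convert h' using 2 with n
  rw [← Real.rpow_natCast]; norm_num

lemma norm_lp_two' (f : lp (fun _ : ℤ => ℂ) 2) : ‖f‖ = Real.sqrt (∑' n, ‖f n‖ ^ 2) := by
  have h := lp.norm_rpow_eq_tsum (p := 2) (by norm_num) f
  have h2 : (2 : ℝ≥0∞).toReal = 2 := by norm_num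
  rw [h2] at h
  have h3 : ‖f‖ ^ (2:ℝ) = ‖f‖ ^ 2 := by rw [← Real.rpow_natCast]; norm_num
  have h4 : ∀ n : ℤ, ‖f n‖ ^ (2:ℝ) = ‖f n‖ ^ 2 := fun n => by
    rw [← Real.rpow_natCast]; norm_num
  rw [h3] at h
  simp only [h4] at h
  rw [← h, Real.sqrt_sq (norm_nonneg _)]

lemma aux_sum' (k0 lam : ℝ) (u v : ℤ → ℂ)
    (hu : Summable fun n : ℤ => ‖u n‖ ^ 2)
    (hv : Summable fun n : ℤ => (kk k0 lam n) ^ 4 * ‖v n‖ ^ 2)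
    (c : ℝ) (s t : ℤ) (f : ℤ → ℂ)
    (hf : ∀ n, ‖f n‖ ≤ c * (‖u (n + s)‖ * ((kk k0 lam (n + t)) ^ 2 * ‖v (n + t)‖))) :
    Summable (fun n : ℤ => ‖f n‖ ^ 2) ∧
      ∑' n : ℤ, ‖f n‖ ^ 2 ≤
        c ^ 2 * (∑' n : ℤ, ‖u n‖ ^ 2) * (∑' n : ℤ, (kk k0 lam n) ^ 4 * ‖v n‖ ^ 2) := by
  set Su := ∑' n : ℤ, ‖u n‖ ^ 2 with hSu
  have hSu0 : 0 ≤ Su := tsum_nonneg fun n => sq_nonneg _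
  have hule : ∀ m : ℤ, ‖u m‖ ^ 2 ≤ Su := fun m => hu.le_tsum m fun _ _ => sq_nonneg _
  have hvt : Summable fun n : ℤ => (kk k0 lam (n + t)) ^ 4 * ‖v (n + t)‖ ^ 2 :=
    (Equiv.addRight t).summable_iff.mpr hv
  have hvt_sum : ∑' n : ℤ, (kk k0 lam (n + t)) ^ 4 * ‖v (n + t)‖ ^ 2
      = ∑' n : ℤ, (kk k0 lam n) ^ 4 * ‖v n‖ ^ 2 :=
    (Equiv.addRight t).tsum_eq fun n => (kk k0 lam n) ^ 4 * ‖v n‖ ^ 2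
  have key : ∀ n : ℤ, ‖f n‖ ^ 2 ≤ c ^ 2 * Su * ((kk k0 lam (n + t)) ^ 4 * ‖v (n + t)‖ ^ 2) := by
    intro n
    have h1 : ‖f n‖ ^ 2 ≤ (c * (‖u (n + s)‖ * ((kk k0 lam (n + t)) ^ 2 * ‖v (n + t)‖))) ^ 2 :=
      pow_le_pow_left₀ (norm_nonneg _) (hf n) 2
    have h2 : (c * (‖u (n + s)‖ * ((kk k0 lam (n + t)) ^ 2 * ‖v (n + t)‖))) ^ 2
        = c ^ 2 * ‖u (n + s)‖ ^ 2 * ((kk k0 lam (n + t)) ^ 4 * ‖v (n + t)‖ ^ 2) := by ring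
    have h3 : c ^ 2 * ‖u (n + s)‖ ^ 2 * ((kk k0 lam (n + t)) ^ 4 * ‖v (n + t)‖ ^ 2)
        ≤ c ^ 2 * Su * ((kk k0 lam (n + t)) ^ 4 * ‖v (n + t)‖ ^ 2) := by
      apply mul_le_mul_of_nonneg_right _ (by positivity)
      exact mul_le_mul_of_nonneg_left (hule _) (sq_nonneg c)
    calc ‖f n‖ ^ 2 ≤ _ := h1
      _ = _ := h2
      _ ≤ _ := h3
  have hg : Summable fun n : ℤ => c ^ 2 * Su * ((kk k0 lam (n + t)) ^ 4 * ‖v (n + t)‖ ^ 2) :=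
    hvt.mul_left _
  have hfs : Summable fun n : ℤ => ‖f n‖ ^ 2 :=
    Summable.of_nonneg_of_le (fun n => sq_nonneg _) key hg
  refine ⟨hfs, ?_⟩
  calc ∑' n : ℤ, ‖f n‖ ^ 2 ≤ ∑' n : ℤ, c ^ 2 * Su * ((kk k0 lam (n + t)) ^ 4 * ‖v (n + t)‖ ^ 2) :=
        Summable.tsum_le_tsum key hfs hg
    _ = c ^ 2 * Su * ∑' n : ℤ, (kk k0 lam (n + t)) ^ 4 * ‖v (n + t)‖ ^ 2 := tsum_mul_left
    _ = _ := by rw [hvt_sum]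

lemma kk_pos' {k0 lam : ℝ} (hk0 : 0 < k0) (hlam : 0 < lam) (n : ℤ) : 0 < kk k0 lam n :=
  mul_pos hk0 (zpow_pos hlam n)

/-- The four pieces of `kₙ • B(u,v)ₙ`. -/
noncomputable def sabraB1 (a k0 lam : ℝ) (u v : ℤ → ℂ) (n : ℤ) : ℂ :=
  if 1 ≤ n then (kk k0 lam n : ℂ) *
    ((a : ℂ) * (kk k0 lam (n + 1) : ℂ) * v (n + 2) * (starRingEnd ℂ) (u (n + 1))) else 0

noncomputable def sabraB2 (b k0 lam : ℝ) (u v : ℤ → ℂ) (n : ℤ) : ℂ :=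
  if 1 ≤ n then (kk k0 lam n : ℂ) *
    ((b : ℂ) * (kk k0 lam n : ℂ) * v (n + 1) * (starRingEnd ℂ) (u (n - 1))) else 0

noncomputable def sabraB3 (a k0 lam : ℝ) (u v : ℤ → ℂ) (n : ℤ) : ℂ :=
  if 1 ≤ n then (kk k0 lam n : ℂ) *
    ((a : ℂ) * (kk k0 lam (n - 1) : ℂ) * u (n - 1) * v (n - 2)) else 0

noncomputable def sabraB4 (b k0 lam : ℝ) (u v : ℤ → ℂ) (n : ℤ) : ℂ :=
  if 1 ≤ n then (kk k0 lam n : ℂ) *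
    ((b : ℂ) * (kk k0 lam (n - 1) : ℂ) * v (n - 1) * u (n - 2)) else 0

lemma sabraB_decomp (a b k0 lam : ℝ) (u v : ℤ → ℂ) (n : ℤ) :
    (kk k0 lam n : ℂ) * sabraB a b k0 lam u v n =
      -Complex.I * (sabraB1 a k0 lam u v n + sabraB2 b k0 lam u v n
        + sabraB3 a k0 lam u v n + sabraB4 b k0 lam u v n) := by
  by_cases hn : 1 ≤ n <;>
    simp only [sabraB, sabraB1, sabraB2, sabraB3, sabraB4, if_pos, if_neg, hn, if_true, if_false]
  · ring
  · simp

lemma id1' {k0 lam : ℝ} (hl : 0 < lam) (n : ℤ) :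
    kk k0 lam n * kk k0 lam (n + 1) = (lam ^ 3)⁻¹ * (kk k0 lam (n + 2)) ^ 2 := by
  have h := hl.ne'
  simp only [kk, zpow_add₀ h, zpow_one, zpow_two]
  field_simp

lemma id2' {k0 lam : ℝ} (hl : 0 < lam) (n : ℤ) :
    kk k0 lam n * kk k0 lam n = (lam ^ 2)⁻¹ * (kk k0 lam (n + 1)) ^ 2 := by
  have h := hl.ne'
  simp only [kk, zpow_add₀ h, zpow_one, zpow_two]
  field_simp

lemma id3' {k0 lam : ℝ} (hl : 0 < lam) (n : ℤ) :
    kk k0 lam n * kk k0 lam (n - 1) = lam ^ 3 * (kk k0 lam (n - 2)) ^ 2 := by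
  have h := hl.ne'
  obtain ⟨m, rfl⟩ : ∃ m, n = m + 2 := ⟨n - 2, by ring⟩
  have e2 : m + 2 - 1 = m + 1 := by ring
  have e3 : m + 2 - 2 = m := by ring
  rw [e2, e3]
  simp only [kk, zpow_add₀ h, zpow_one, zpow_two]
  ring

lemma id4' {k0 lam : ℝ} (hl : 0 < lam) (n : ℤ) :
    kk k0 lam n * kk k0 lam (n - 1) = lam * (kk k0 lam (n - 1)) ^ 2 := by
  have h := hl.ne'
  obtain ⟨m, rfl⟩ : ∃ m, n = m + 1 := ⟨n - 1, by ring⟩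
  have e2 : m + 1 - 1 = m := by ring
  rw [e2]
  simp only [kk, zpow_add₀ h, zpow_one, zpow_two]
  ring

lemma bound1' (a k0 lam : ℝ) (hk0 : 0 < k0) (hl : 0 < lam) (u v : ℤ → ℂ) (n : ℤ) :
    ‖sabraB1 a k0 lam u v n‖ ≤
      (|a| * (lam ^ 3)⁻¹) * (‖u (n + 1)‖ * ((kk k0 lam (n + 2)) ^ 2 * ‖v (n + 2)‖)) := by
  have habs : ∀ m : ℤ, |kk k0 lam m| = kk k0 lam m := fun m => abs_of_pos (kk_pos' hk0 hl m)
  by_cases hn : 1 ≤ n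
  · rw [sabraB1, if_pos hn]
    have hE : ‖(kk k0 lam n : ℂ) *
        ((a : ℂ) * (kk k0 lam (n + 1) : ℂ) * v (n + 2) * (starRingEnd ℂ) (u (n + 1)))‖
        = kk k0 lam n * (|a| * kk k0 lam (n + 1) * ‖v (n + 2)‖ * ‖u (n + 1)‖) := by
      simp [norm_mul, Complex.norm_real, Real.norm_eq_abs, habs, RCLike.norm_conj]
    rw [hE]
    apply le_of_eq
    calc kk k0 lam n * (|a| * kk k0 lam (n + 1) * ‖v (n + 2)‖ * ‖u (n + 1)‖)
        = |a| * (kk k0 lam n * kk k0 lam (n + 1)) * (‖v (n + 2)‖ * ‖u (n + 1)‖) := by ring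
      _ = |a| * ((lam ^ 3)⁻¹ * (kk k0 lam (n + 2)) ^ 2) * (‖v (n + 2)‖ * ‖u (n + 1)‖) := by
          rw [id1' hl]
      _ = _ := by ring
  · rw [sabraB1, if_neg hn]
    simp only [norm_zero]
    exact mul_nonneg (mul_nonneg (abs_nonneg _) (inv_nonneg.2 (pow_nonneg hl.le 3)))
      (mul_nonneg (norm_nonneg _) (mul_nonneg (sq_nonneg _) (norm_nonneg _)))

lemma bound2' (b k0 lam : ℝ) (hk0 : 0 < k0) (hl : 0 < lam) (u v : ℤ → ℂ) (n : ℤ) :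
    ‖sabraB2 b k0 lam u v n‖ ≤
      (|b| * (lam ^ 2)⁻¹) * (‖u (n + (-1))‖ * ((kk k0 lam (n + 1)) ^ 2 * ‖v (n + 1)‖)) := by
  have habs : ∀ m : ℤ, |kk k0 lam m| = kk k0 lam m := fun m => abs_of_pos (kk_pos' hk0 hl m)
  have e : n + (-1) = n - 1 := by ring
  rw [e]
  by_cases hn : 1 ≤ n
  · rw [sabraB2, if_pos hn]
    have hE : ‖(kk k0 lam n : ℂ) *
        ((b : ℂ) * (kk k0 lam n : ℂ) * v (n + 1) * (starRingEnd ℂ) (u (n - 1)))‖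
        = kk k0 lam n * (|b| * kk k0 lam n * ‖v (n + 1)‖ * ‖u (n - 1)‖) := by
      simp [norm_mul, Complex.norm_real, Real.norm_eq_abs, habs, RCLike.norm_conj]
    rw [hE]
    apply le_of_eq
    calc kk k0 lam n * (|b| * kk k0 lam n * ‖v (n + 1)‖ * ‖u (n - 1)‖)
        = |b| * (kk k0 lam n * kk k0 lam n) * (‖v (n + 1)‖ * ‖u (n - 1)‖) := by ring
      _ = |b| * ((lam ^ 2)⁻¹ * (kk k0 lam (n + 1)) ^ 2) * (‖v (n + 1)‖ * ‖u (n - 1)‖) := by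
          rw [id2' hl]
      _ = _ := by ring
  · rw [sabraB2, if_neg hn]
    simp only [norm_zero]
    exact mul_nonneg (mul_nonneg (abs_nonneg _) (inv_nonneg.2 (pow_nonneg hl.le 2)))
      (mul_nonneg (norm_nonneg _) (mul_nonneg (sq_nonneg _) (norm_nonneg _)))

lemma bound3' (a k0 lam : ℝ) (hk0 : 0 < k0) (hl : 0 < lam) (u v : ℤ → ℂ) (n : ℤ) :
    ‖sabraB3 a k0 lam u v n‖ ≤
      (|a| * lam ^ 3) * (‖u (n + (-1))‖ * ((kk k0 lam (n + (-2))) ^ 2 * ‖v (n + (-2))‖)) := by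
  have habs : ∀ m : ℤ, |kk k0 lam m| = kk k0 lam m := fun m => abs_of_pos (kk_pos' hk0 hl m)
  have e : n + (-1) = n - 1 := by ring
  have e2 : n + (-2) = n - 2 := by ring
  rw [e, e2]
  by_cases hn : 1 ≤ n
  · rw [sabraB3, if_pos hn]
    have hE : ‖(kk k0 lam n : ℂ) *
        ((a : ℂ) * (kk k0 lam (n - 1) : ℂ) * u (n - 1) * v (n - 2))‖
        = kk k0 lam n * (|a| * kk k0 lam (n - 1) * ‖u (n - 1)‖ * ‖v (n - 2)‖) := by
      simp [norm_mul, Complex.norm_real, Real.norm_eq_abs, habs]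
    rw [hE]
    apply le_of_eq
    calc kk k0 lam n * (|a| * kk k0 lam (n - 1) * ‖u (n - 1)‖ * ‖v (n - 2)‖)
        = |a| * (kk k0 lam n * kk k0 lam (n - 1)) * (‖u (n - 1)‖ * ‖v (n - 2)‖) := by ring
      _ = |a| * (lam ^ 3 * (kk k0 lam (n - 2)) ^ 2) * (‖u (n - 1)‖ * ‖v (n - 2)‖) := by
          rw [id3' hl]
      _ = _ := by ring
  · rw [sabraB3, if_neg hn]
    simp only [norm_zero]
    exact mul_nonneg (mul_nonneg (abs_nonneg _) (pow_nonneg hl.le 3))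
      (mul_nonneg (norm_nonneg _) (mul_nonneg (sq_nonneg _) (norm_nonneg _)))

lemma bound4' (b k0 lam : ℝ) (hk0 : 0 < k0) (hl : 0 < lam) (u v : ℤ → ℂ) (n : ℤ) :
    ‖sabraB4 b k0 lam u v n‖ ≤
      (|b| * lam) * (‖u (n + (-2))‖ * ((kk k0 lam (n + (-1))) ^ 2 * ‖v (n + (-1))‖)) := by
  have habs : ∀ m : ℤ, |kk k0 lam m| = kk k0 lam m := fun m => abs_of_pos (kk_pos' hk0 hl m)
  have e : n + (-1) = n - 1 := by ring
  have e2 : n + (-2) = n - 2 := by ring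
  rw [e, e2]
  by_cases hn : 1 ≤ n
  · rw [sabraB4, if_pos hn]
    have hE : ‖(kk k0 lam n : ℂ) *
        ((b : ℂ) * (kk k0 lam (n - 1) : ℂ) * v (n - 1) * u (n - 2))‖
        = kk k0 lam n * (|b| * kk k0 lam (n - 1) * ‖v (n - 1)‖ * ‖u (n - 2)‖) := by
      simp [norm_mul, Complex.norm_real, Real.norm_eq_abs, habs]
    rw [hE]
    apply le_of_eq
    calc kk k0 lam n * (|b| * kk k0 lam (n - 1) * ‖v (n - 1)‖ * ‖u (n - 2)‖)
        = |b| * (kk k0 lam n * kk k0 lam (n - 1)) * (‖v (n - 1)‖ * ‖u (n - 2)‖) := by ring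
      _ = |b| * (lam * (kk k0 lam (n - 1)) ^ 2) * (‖v (n - 1)‖ * ‖u (n - 2)‖) := by
          rw [id4' hl]
      _ = _ := by ring
  · rw [sabraB4, if_neg hn]
    simp only [norm_zero]
    exact mul_nonneg (mul_nonneg (abs_nonneg _) hl.le)
      (mul_nonneg (norm_nonneg _) (mul_nonneg (sq_nonneg _) (norm_nonneg _)))

lemma sqrt_bound' (c Su Sv X : ℝ) (hc : 0 ≤ c) (hSu : 0 ≤ Su)
    (hX : X ≤ c ^ 2 * Su * Sv) :
    Real.sqrt X ≤ c * Real.sqrt Su * Real.sqrt Sv := by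
  calc Real.sqrt X ≤ Real.sqrt (c ^ 2 * Su * Sv) := Real.sqrt_le_sqrt hX
    _ = Real.sqrt (c ^ 2 * Su) * Real.sqrt Sv := Real.sqrt_mul (by positivity) _
    _ = Real.sqrt (c ^ 2) * Real.sqrt Su * Real.sqrt Sv := by rw [Real.sqrt_mul (by positivity)]
    _ = c * Real.sqrt Su * Real.sqrt Sv := by rw [Real.sqrt_sq hc]


end Aux

/-- for `u ∈ H`, `v ∈ D(A)`, `‖B(u,v)‖_V ≤ C₃ |u| |Av|` with
`C₃ = |a|(λ³+λ⁻³) + |b|(λ+λ⁻²)`, where `|Av|² = Σ kₙ⁴|vₙ|²` and `‖f‖_V² = Σ kₙ²|fₙ|²`. -/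
theorem sabraB_H_DA_bound (a b k0 lam : ℝ) (hk0 : 0 < k0) (hlam : 1 < lam)
    (u v : ℤ → ℂ) (hu0 : ∀ n : ℤ, n ≤ 0 → u n = 0) (hv0 : ∀ n : ℤ, n ≤ 0 → v n = 0)
    (hu : Summable fun n : ℤ => ‖u n‖ ^ 2)
    (hv : Summable fun n : ℤ => (kk k0 lam n) ^ 4 * ‖v n‖ ^ 2) :
    Summable (fun n : ℤ => (kk k0 lam n) ^ 2 * ‖sabraB a b k0 lam u v n‖ ^ 2) ∧
      Real.sqrt (∑' n : ℤ, (kk k0 lam n) ^ 2 * ‖sabraB a b k0 lam u v n‖ ^ 2) ≤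
        (|a| * (lam ^ 3 + (lam ^ 3)⁻¹) + |b| * (lam + (lam ^ 2)⁻¹)) *
          Real.sqrt (∑' n : ℤ, ‖u n‖ ^ 2) *
          Real.sqrt (∑' n : ℤ, (kk k0 lam n) ^ 4 * ‖v n‖ ^ 2) := by
  have hl : 0 < lam := lt_trans one_pos hlam
  obtain ⟨hs1, ht1⟩ := aux_sum' k0 lam u v hu hv (|a| * (lam ^ 3)⁻¹) 1 2
    (sabraB1 a k0 lam u v) (fun n => bound1' a k0 lam hk0 hl u v n)
  obtain ⟨hs2, ht2⟩ := aux_sum' k0 lam u v hu hv (|b| * (lam ^ 2)⁻¹) (-1) 1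
    (sabraB2 b k0 lam u v) (fun n => bound2' b k0 lam hk0 hl u v n)
  obtain ⟨hs3, ht3⟩ := aux_sum' k0 lam u v hu hv (|a| * lam ^ 3) (-1) (-2)
    (sabraB3 a k0 lam u v) (fun n => bound3' a k0 lam hk0 hl u v n)
  obtain ⟨hs4, ht4⟩ := aux_sum' k0 lam u v hu hv (|b| * lam) (-2) (-1)
    (sabraB4 b k0 lam u v) (fun n => bound4' b k0 lam hk0 hl u v n)
  have m1 := memℓp_two_of_sq' _ hs1
  have m2 := memℓp_two_of_sq' _ hs2
  have m3 := memℓp_two_of_sq' _ hs3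
  have m4 := memℓp_two_of_sq' _ hs4
  set F1 : lp (fun _ : ℤ => ℂ) 2 := ⟨sabraB1 a k0 lam u v, m1⟩ with hF1
  set F2 : lp (fun _ : ℤ => ℂ) 2 := ⟨sabraB2 b k0 lam u v, m2⟩ with hF2
  set F3 : lp (fun _ : ℤ => ℂ) 2 := ⟨sabraB3 a k0 lam u v, m3⟩ with hF3
  set F4 : lp (fun _ : ℤ => ℂ) 2 := ⟨sabraB4 b k0 lam u v, m4⟩ with hF4
  set F : lp (fun _ : ℤ => ℂ) 2 := F1 + F2 + F3 + F4 with hF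
  have hFcoe : ∀ n : ℤ, F n = sabraB1 a k0 lam u v n + sabraB2 b k0 lam u v n
      + sabraB3 a k0 lam u v n + sabraB4 b k0 lam u v n := by
    intro n
    rw [hF]
    rw [lp.coeFn_add, lp.coeFn_add, lp.coeFn_add]
    rfl
  have hpt : ∀ n : ℤ, (kk k0 lam n) ^ 2 * ‖sabraB a b k0 lam u v n‖ ^ 2 = ‖F n‖ ^ 2 := by
    intro n
    have h1 : ‖(kk k0 lam n : ℂ) * sabraB a b k0 lam u v n‖
        = kk k0 lam n * ‖sabraB a b k0 lam u v n‖ := by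
      rw [norm_mul, Complex.norm_real, Real.norm_eq_abs, abs_of_pos (kk_pos' hk0 hl n)]
    have h2 : ‖F n‖ = ‖(kk k0 lam n : ℂ) * sabraB a b k0 lam u v n‖ := by
      rw [sabraB_decomp, norm_mul, hFcoe n]
      simp
    calc (kk k0 lam n) ^ 2 * ‖sabraB a b k0 lam u v n‖ ^ 2
        = (kk k0 lam n * ‖sabraB a b k0 lam u v n‖) ^ 2 := by ring
      _ = ‖(kk k0 lam n : ℂ) * sabraB a b k0 lam u v n‖ ^ 2 := by rw [h1]
      _ = ‖F n‖ ^ 2 := by rw [h2]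
  have hfun : (fun n : ℤ => (kk k0 lam n) ^ 2 * ‖sabraB a b k0 lam u v n‖ ^ 2)
      = fun n : ℤ => ‖F n‖ ^ 2 := funext hpt
  have hSu0 : 0 ≤ ∑' n : ℤ, ‖u n‖ ^ 2 := tsum_nonneg fun n => sq_nonneg _
  have hc1 : 0 ≤ |a| * (lam ^ 3)⁻¹ :=
    mul_nonneg (abs_nonneg _) (inv_nonneg.2 (pow_nonneg hl.le 3))
  have hc2 : 0 ≤ |b| * (lam ^ 2)⁻¹ :=
    mul_nonneg (abs_nonneg _) (inv_nonneg.2 (pow_nonneg hl.le 2))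
  have hc3 : 0 ≤ |a| * lam ^ 3 := mul_nonneg (abs_nonneg _) (pow_nonneg hl.le 3)
  have hc4 : 0 ≤ |b| * lam := mul_nonneg (abs_nonneg _) hl.le
  constructor
  · rw [hfun]
    exact summable_sq_of_memℓp' _ (lp.memℓp F)
  · rw [hfun, ← norm_lp_two' F]
    have hN1 : ‖F1‖ ≤ (|a| * (lam ^ 3)⁻¹) * Real.sqrt (∑' n : ℤ, ‖u n‖ ^ 2) *
        Real.sqrt (∑' n : ℤ, (kk k0 lam n) ^ 4 * ‖v n‖ ^ 2) := by
      rw [norm_lp_two']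
      exact sqrt_bound' _ _ _ _ hc1 hSu0 ht1
    have hN2 : ‖F2‖ ≤ (|b| * (lam ^ 2)⁻¹) * Real.sqrt (∑' n : ℤ, ‖u n‖ ^ 2) *
        Real.sqrt (∑' n : ℤ, (kk k0 lam n) ^ 4 * ‖v n‖ ^ 2) := by
      rw [norm_lp_two']
      exact sqrt_bound' _ _ _ _ hc2 hSu0 ht2
    have hN3 : ‖F3‖ ≤ (|a| * lam ^ 3) * Real.sqrt (∑' n : ℤ, ‖u n‖ ^ 2) *
        Real.sqrt (∑' n : ℤ, (kk k0 lam n) ^ 4 * ‖v n‖ ^ 2) := by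
      rw [norm_lp_two']
      exact sqrt_bound' _ _ _ _ hc3 hSu0 ht3
    have hN4 : ‖F4‖ ≤ (|b| * lam) * Real.sqrt (∑' n : ℤ, ‖u n‖ ^ 2) *
        Real.sqrt (∑' n : ℤ, (kk k0 lam n) ^ 4 * ‖v n‖ ^ 2) := by
      rw [norm_lp_two']
      exact sqrt_bound' _ _ _ _ hc4 hSu0 ht4
    have htri : ‖F‖ ≤ ‖F1‖ + ‖F2‖ + ‖F3‖ + ‖F4‖ := by
      rw [hF]
      calc ‖F1 + F2 + F3 + F4‖ ≤ ‖F1 + F2 + F3‖ + ‖F4‖ := norm_add_le _ _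
        _ ≤ (‖F1 + F2‖ + ‖F3‖) + ‖F4‖ := by
            exact add_le_add_left (norm_add_le _ _) _
        _ ≤ ((‖F1‖ + ‖F2‖) + ‖F3‖) + ‖F4‖ := by
            exact add_le_add_left (add_le_add_left (norm_add_le _ _) _) _
    have hring : (|a| * (lam ^ 3)⁻¹) * Real.sqrt (∑' n : ℤ, ‖u n‖ ^ 2) *
          Real.sqrt (∑' n : ℤ, (kk k0 lam n) ^ 4 * ‖v n‖ ^ 2)
        + (|b| * (lam ^ 2)⁻¹) * Real.sqrt (∑' n : ℤ, ‖u n‖ ^ 2) *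
          Real.sqrt (∑' n : ℤ, (kk k0 lam n) ^ 4 * ‖v n‖ ^ 2)
        + (|a| * lam ^ 3) * Real.sqrt (∑' n : ℤ, ‖u n‖ ^ 2) *
          Real.sqrt (∑' n : ℤ, (kk k0 lam n) ^ 4 * ‖v n‖ ^ 2)
        + (|b| * lam) * Real.sqrt (∑' n : ℤ, ‖u n‖ ^ 2) *
          Real.sqrt (∑' n : ℤ, (kk k0 lam n) ^ 4 * ‖v n‖ ^ 2)
        = (|a| * (lam ^ 3 + (lam ^ 3)⁻¹) + |b| * (lam + (lam ^ 2)⁻¹)) *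
          Real.sqrt (∑' n : ℤ, ‖u n‖ ^ 2) *
          Real.sqrt (∑' n : ℤ, (kk k0 lam n) ^ 4 * ‖v n‖ ^ 2) := by ring
    linarith
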